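/- Let (R, m) be a Cohen-Macaulay local ring of dimension one whose integral closure R̄ in the total quotient ring Q(R) is a discrete valuation ring with maximal ideal n, such that R̄ is a finitely generated R-module and the natural map R/m → R̄/n is an isomorphism. Let I be a regular ideal of R, let a, b be non-zerodivisors of R with α := a/b ∈ R:I. Then ℓ_R(R/αI) = ℓ_R(R/I) + v(α), where v is the normalized valuation associated to R̄. -/

import Mathlib

set_option synthInstance.maxHeartbeats 1000000
set_option maxHeartbeats 4000000

/-- Supremum of lengths of strictly increasing finite chains in a preorder. -/
noncomputable def chainLen (α : Type*) [Preorder α] : ℕ∞ :=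
  ⨆ s : RelSeries {(a, b) : α × α | a < b}, (s.length : ℕ∞)

/-- The length of an `R`-module `M`: the longest chain of submodules. -/
noncomputable def modLength (R M : Type*) [CommRing R] [AddCommGroup M] [Module R M] : ℕ∞ :=
  chainLen (Submodule R M)

section ChainLenBasic

variable {α β : Type*} [Preorder α] [Preorder β]

lemma length_le_chainLen (s : RelSeries {(a, b) : α × α | a < b}) :
    (s.length : ℕ∞) ≤ chainLen α :=
  le_iSup (fun s : RelSeries {(a, b) : α × α | a < b} => (s.length : ℕ∞)) s

lemma chainLen_le_of_strictMono (f : α → β) (hf : StrictMono f) : chainLen α ≤ chainLen β :=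
  iSup_le fun s => by simpa using length_le_chainLen (LTSeries.map s f hf)

lemma chainLen_eq_of_orderIso (e : α ≃o β) : chainLen α = chainLen β :=
  le_antisymm (chainLen_le_of_strictMono e e.strictMono)
    (chainLen_le_of_strictMono e.symm e.symm.strictMono)

lemma chainLen_eq_zero_of_subsingleton [Subsingleton α] : chainLen α = 0 := by
  refine le_antisymm (iSup_le fun s => ?_) zero_le
  rcases Nat.eq_zero_or_pos s.length with h | h
  · simp [h]
  · exact ((ne_of_lt (s.step ⟨0, h⟩)) (Subsingleton.elim _ _)).elim

end ChainLenBasic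

section ModLength

variable {R M N : Type*} [CommRing R] [AddCommGroup M] [Module R M]
  [AddCommGroup N] [Module R N]

lemma modLength_congr (e : M ≃ₗ[R] N) : modLength R M = modLength R N :=
  chainLen_eq_of_orderIso (Submodule.orderIsoMapComap e)

lemma modLength_le_of_surjective (f : M →ₗ[R] N) (hf : Function.Surjective f) :
    modLength R N ≤ modLength R M :=
  chainLen_le_of_strictMono _ (Submodule.comap_strictMono_of_surjective hf)

lemma modLength_eq_zero_of_subsingleton [Subsingleton M] : modLength R M = 0 := by
  have : Subsingleton (Submodule R M) := by
    constructor
    intro p q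
    ext x
    rw [Subsingleton.elim x 0]
    simp
  exact chainLen_eq_zero_of_subsingleton

lemma modLength_eq_one_of_isSimpleModule [IsSimpleModule R M] : modLength R M = 1 := by
  refine le_antisymm (iSup_le fun s => ?_) ?_
  · have hlen : s.length ≤ 1 := by
      by_contra h
      push_neg at h
      have e1 := s.step ⟨0, by omega⟩
      have e2 := s.step ⟨1, by omega⟩
      have hmid : (⟨0, by omega⟩ : Fin s.length).succ
          = Fin.castSucc ⟨1, by omega⟩ := by ext; simp
      rw [hmid] at e1
      rcases eq_bot_or_eq_top (s (Fin.castSucc ⟨1, by omega⟩)) with hb | ht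
      · rw [hb] at e1; exact not_lt_bot (show s.toFun _ < ⊥ from e1)
      · rw [ht] at e2; exact not_top_lt (show ⊤ < s.toFun _ from e2)
    exact_mod_cast hlen
  · have := length_le_chainLen ((RelSeries.singleton {(a, b) : Submodule R M × Submodule R M | a < b} ⊥).snoc ⊤
      (by simpa using bot_lt_top))
    exact le_trans (by simp) this

lemma exists_LTSeries_pair (p : Submodule R M) (s : LTSeries (Submodule R M)) :
    ∃ (t : LTSeries (Submodule R p)) (u : LTSeries (Submodule R (M ⧸ p))),
      t.last = s.last.comap p.subtype ∧ u.last = s.last.map p.mkQ ∧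
      s.length ≤ t.length + u.length := by
  suffices H : ∀ (n : ℕ) (s : LTSeries (Submodule R M)), s.length = n →
      ∃ (t : LTSeries (Submodule R p)) (u : LTSeries (Submodule R (M ⧸ p))),
      t.last = s.last.comap p.subtype ∧ u.last = s.last.map p.mkQ ∧
      s.length ≤ t.length + u.length by exact H s.length s rfl
  intro n
  induction n with
  | zero =>
    intro s hn
    exact ⟨RelSeries.singleton _ _, RelSeries.singleton _ _, RelSeries.last_singleton _,
      RelSeries.last_singleton _, by simp [hn]⟩
  | succ n ih =>
    intro s hn
    obtain ⟨t, u, ht, hu, hlen⟩ := ih s.eraseLast (by simp [hn])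
    have hpq : s.eraseLast.last < s.last := s.eraseLast_last_rel_last (by omega)
    have hc : s.eraseLast.last.comap p.subtype ≤ s.last.comap p.subtype :=
      Submodule.comap_mono hpq.le
    have hm : s.eraseLast.last.map p.mkQ ≤ s.last.map p.mkQ := Submodule.map_mono hpq.le
    have hel : s.eraseLast.length = n := by simp [hn]
    rcases hc.lt_or_eq with hc' | hc'
    · rcases hm.lt_or_eq with hm' | hm'
      · refine ⟨t.snoc _ (ht ▸ hc'), u.snoc _ (hu ▸ hm'), by simp, by simp, ?_⟩
        simp only [RelSeries.snoc_length]
        omega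
      · refine ⟨t.snoc _ (ht ▸ hc'), u, by simp, hu.trans hm', ?_⟩
        simp only [RelSeries.snoc_length]
        omega
    · have hm' : s.eraseLast.last.map p.mkQ < s.last.map p.mkQ := by
        refine hm.lt_of_ne fun hmeq => hpq.ne ?_
        refine le_antisymm hpq.le fun x hxQ => ?_
        have hx1 : p.mkQ x ∈ s.eraseLast.last.map p.mkQ := by
          rw [hmeq]; exact Submodule.mem_map_of_mem hxQ
        obtain ⟨y, hyP, hyx⟩ := hx1
        have hxy : x - y ∈ p := by
          have : (Submodule.Quotient.mk x : M ⧸ p) = Submodule.Quotient.mk y := by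
            simp only [Submodule.mkQ_apply] at hyx
            exact hyx.symm
          exact (Submodule.Quotient.eq p).mp this
        have h2 : (⟨x - y, hxy⟩ : p) ∈ s.last.comap p.subtype := by
          simpa using s.last.sub_mem hxQ (hpq.le hyP)
        rw [← hc'] at h2
        have h3 : x - y ∈ s.eraseLast.last := h2
        simpa using s.eraseLast.last.add_mem h3 hyP
      refine ⟨t, u.snoc _ (hu ▸ hm'), ht.trans hc', by simp, ?_⟩
      simp only [RelSeries.snoc_length]
      omega

lemma modLength_eq_add (p : Submodule R M) :
    modLength R M = modLength R p + modLength R (M ⧸ p) := by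
  refine le_antisymm ?_ ?_
  · refine iSup_le fun s => ?_
    obtain ⟨t, u, -, -, hlen⟩ := exists_LTSeries_pair p s
    calc (s.length : ℕ∞) ≤ (t.length : ℕ∞) + (u.length : ℕ∞) := by exact_mod_cast hlen
      _ ≤ _ := add_le_add (length_le_chainLen t) (length_le_chainLen u)
  · haveI : Nonempty (RelSeries {(a, b) : Submodule R p × Submodule R p | a < b}) :=
      ⟨RelSeries.singleton _ ⊥⟩
    haveI : Nonempty (RelSeries {(a, b) : Submodule R (M ⧸ p) × Submodule R (M ⧸ p) | a < b}) :=
      ⟨RelSeries.singleton _ ⊥⟩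
    refine ENat.iSup_add_iSup_le fun t u => ?_
    have h1 : StrictMono (Submodule.map p.subtype) :=
      Submodule.map_strictMono_of_injective p.injective_subtype
    have h2 : StrictMono (Submodule.comap p.mkQ) :=
      Submodule.comap_strictMono_of_surjective p.mkQ_surjective
    set A := LTSeries.map t _ h1 with hA
    set B := LTSeries.map u _ h2 with hB
    have hle : A.last ≤ B.head := by
      have hA' : A.last ≤ p := by
        rw [hA, LTSeries.last_map]
        exact Submodule.map_subtype_le p _
      have hB' : p ≤ B.head := by
        rw [hB, LTSeries.head_map]
        intro x hx
        have hx0 : p.mkQ x = 0 := by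
          simpa using (Submodule.Quotient.mk_eq_zero p).mpr hx
        simp [Submodule.mem_comap, hx0]
      exact hA'.trans hB'
    have hAlen : A.length = t.length := rfl
    have hBlen : B.length = u.length := rfl
    rcases hle.lt_or_eq with hlt | heq
    · refine le_trans ?_ (length_le_chainLen (A.append B hlt))
      have : t.length + u.length ≤ (A.append B hlt).length := by
        simp [RelSeries.append_length, hAlen, hBlen]
      exact_mod_cast this
    · refine le_trans ?_ (length_le_chainLen (A.smash B heq))
      have : t.length + u.length ≤ (A.smash B heq).length := by
        simp [RelSeries.smash_length, hAlen, hBlen]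
      exact_mod_cast this

end ModLength

section KeyDecomp

variable (A S : Type*) [CommRing A] [CommRing S] [Algebra A S]

/-- Key decomposition: for a non-zerodivisor `x` and ideal `K` of `S`,
`ℓ_A(S/xK) = ℓ_A(S/K) + ℓ_A(S/xS)`. -/
lemma modLength_mul_span_singleton (x : S) (hx : ∀ s : S, x * s = 0 → s = 0) (K : Ideal S) :
    modLength A (S ⧸ (Ideal.span {x} * K)) =
      modLength A (S ⧸ K) + modLength A (S ⧸ (Ideal.span {x} : Ideal S)) := by
  set I : Ideal S := Ideal.span {x} * K with hI
  have hIK : I ≤ Ideal.span {x} := Ideal.mul_le_left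
  set NS : Submodule S (S ⧸ I) := Submodule.map I.mkQ (Ideal.span {x}) with hNS
  set N : Submodule A (S ⧸ I) := NS.restrictScalars A with hN
  set g : S →ₗ[S] (S ⧸ I) := I.mkQ ∘ₗ LinearMap.mul S S x with hg
  have hker : LinearMap.ker g = K := by
    ext s
    simp only [hg, LinearMap.mem_ker, LinearMap.coe_comp, Function.comp_apply,
      LinearMap.mul_apply', Submodule.mkQ_apply, Submodule.Quotient.mk_eq_zero, hI]
    constructor
    · intro h
      obtain ⟨z, hzK, hzx⟩ := Ideal.mem_span_singleton_mul.mp h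
      have hz : z - s = 0 := hx _ (by rw [mul_sub, hzx, sub_self])
      have : z = s := by
        have := sub_eq_zero.mp hz
        exact this
      exact this ▸ hzK
    · intro h
      exact Ideal.mem_span_singleton_mul.mpr ⟨s, h, rfl⟩
  have hrange : LinearMap.range g = NS := by
    rw [hg, LinearMap.range_comp, hNS]
    congr 1
    ext y
    simp only [LinearMap.mem_range, LinearMap.mul_apply', Ideal.mem_span_singleton']
    exact ⟨fun ⟨c, hc⟩ => ⟨c, by rw [mul_comm]; exact hc⟩,
      fun ⟨c, hc⟩ => ⟨c, by rw [mul_comm]; exact hc⟩⟩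
  have e2 : (S ⧸ K) ≃ₗ[S] NS :=
    (Submodule.quotEquivOfEq K (LinearMap.ker g) hker.symm).trans
      (g.quotKerEquivRange.trans (LinearEquiv.ofEq _ _ hrange))
  have e2' : (S ⧸ K) ≃ₗ[A] N :=
    (e2.restrictScalars A).trans
      ((Submodule.restrictScalarsEquiv A S (S ⧸ I) NS).restrictScalars A).symm
  have e1 : ((S ⧸ I) ⧸ N) ≃ₗ[A] (S ⧸ (Ideal.span {x} : Ideal S)) :=
    (Submodule.Quotient.restrictScalarsEquiv A NS).trans
      ((Submodule.quotientQuotientEquivQuotient I (Ideal.span {x}) hIK).restrictScalars A)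
  rw [modLength_eq_add N, modLength_congr e2'.symm, modLength_congr e1]

end KeyDecomp

section Pow

variable {S : Type*} [CommRing S] [IsDomain S]
variable (A : Type*) [CommRing A] [Algebra A S]

lemma modLength_quot_pow (π : S) (hπ0 : π ≠ 0)
    (h1 : modLength A (S ⧸ (Ideal.span {π} : Ideal S)) = 1) :
    ∀ k : ℕ, modLength A (S ⧸ (Ideal.span {π ^ k} : Ideal S)) = k := by
  intro k
  induction k with
  | zero =>
    have htop : (Ideal.span {π ^ 0} : Ideal S) = ⊤ := by
      simp [Ideal.span_singleton_one]
    haveI : Subsingleton (S ⧸ (Ideal.span {π ^ 0} : Ideal S)) :=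
      Submodule.Quotient.subsingleton_iff.mpr htop
    simpa using modLength_eq_zero_of_subsingleton (R := A) (M := S ⧸ (Ideal.span {π ^ 0} : Ideal S))
  | succ k ih =>
    have hspan : (Ideal.span {π ^ (k + 1)} : Ideal S) = Ideal.span {π} * Ideal.span {π ^ k} := by
      rw [Ideal.span_singleton_mul_span_singleton, ← pow_succ']
    have hreg : ∀ s : S, π * s = 0 → s = 0 := fun s hs => by
      rcases mul_eq_zero.mp hs with h | h
      · exact absurd h hπ0
      · exact h
    rw [hspan, modLength_mul_span_singleton A S π hreg (Ideal.span {π ^ k}), ih, h1]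
    push_cast
    ring

end Pow

section Residue

lemma isSimpleModule_of_res (R S' : Type*) [CommRing R] [CommRing S'] [Algebra R S']
    (n : Ideal S') [hnmax : n.IsMaximal]
    (hres : ∀ y : S', ∃ r : R, algebraMap R S' r - y ∈ n) :
    IsSimpleModule R (S' ⧸ n) := by
  haveI : IsSimpleModule S' (S' ⧸ n) :=
    isSimpleModule_iff_isCoatom.mpr (Ideal.isMaximal_def.mp hnmax)
  have hzero : ∀ ν ∈ n, ∀ v : S' ⧸ n, ν • v = 0 := by
    intro ν hν v
    obtain ⟨y, rfl⟩ := Submodule.mkQ_surjective n v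
    rw [Submodule.mkQ_apply, ← Submodule.Quotient.mk_smul, smul_eq_mul,
      Submodule.Quotient.mk_eq_zero]
    exact n.mul_mem_right y hν
  haveI hnt : Nontrivial (S' ⧸ n) := Submodule.Quotient.nontrivial_iff.mpr
    (hnmax.ne_top)
  haveI : Nontrivial (Submodule R (S' ⧸ n)) := by
    obtain ⟨z, hz⟩ := exists_ne (0 : S' ⧸ n)
    refine ⟨⊥, ⊤, fun h => hz ?_⟩
    have hzmem : z ∈ (⊤ : Submodule R (S' ⧸ n)) := Submodule.mem_top
    rw [← h] at hzmem
    simpa using hzmem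
  refine { eq_bot_or_eq_top := fun U => ?_ }
  rcases eq_or_ne U ⊥ with hU | hU
  · exact Or.inl hU
  · refine Or.inr (eq_top_iff.mpr fun w _ => ?_)
    obtain ⟨u, huU, hu0⟩ := Submodule.exists_mem_ne_zero_of_ne_bot hU
    have hspan : Submodule.span S' {u} = ⊤ := by
      rcases eq_bot_or_eq_top (Submodule.span S' {u}) with h | h
      · exact absurd (by simpa using Submodule.span_eq_bot.mp h u rfl) hu0
      · exact h
    have hw : w ∈ Submodule.span S' {u} := hspan ▸ Submodule.mem_top
    obtain ⟨c, hc⟩ := Submodule.mem_span_singleton.mp hw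
    obtain ⟨r, hr⟩ := hres c
    have hmem : c - algebraMap R S' r ∈ n := by
      simpa using n.neg_mem hr
    have : w = r • u := by
      have h1 : c • u = (c - algebraMap R S' r) • u + (algebraMap R S' r) • u := by
        rw [← add_smul]; ring_nf
      rw [← hc, h1, hzero _ hmem, zero_add, algebraMap_smul]
    rw [this]
    exact U.smul_mem r huU

end Residue

section Sandwich

variable {R S : Type*} [CommRing R] [IsDomain R] [CommRing S] [IsDomain S]
  [Algebra R S] [IsDiscreteValuationRing S]

/-- For a nonzero `x : R`, `ℓ_R(R/xR) = ℓ_S(S/xS)` where `S` is a DVR finite over `R` with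
the same residue field and contained in the fraction field of `R`. -/
lemma modLength_span_eq (hφ : Function.Injective (algebraMap R S))
    (hdenom : ∃ d : R, d ≠ 0 ∧ ∀ s : S, ∃ r : R, algebraMap R S d * s = algebraMap R S r)
    (h1R : modLength R (S ⧸ (IsLocalRing.maximalIdeal S : Ideal S)) = 1)
    (x : R) (hx : x ≠ 0) :
    modLength R (R ⧸ (Ideal.span {x} : Ideal R)) =
      modLength S (S ⧸ (Ideal.span {algebraMap R S x} : Ideal S)) := by
  obtain ⟨π, hπ⟩ := IsDiscreteValuationRing.exists_irreducible S
  have hπ0 : π ≠ 0 := hπ.ne_zero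
  have hnπ : IsLocalRing.maximalIdeal S = Ideal.span {π} := hπ.maximalIdeal_eq
  have h1S : modLength S (S ⧸ (Ideal.span {π} : Ideal S)) = 1 := by
    rw [← hnπ]
    haveI : IsSimpleModule S (S ⧸ (IsLocalRing.maximalIdeal S : Ideal S)) :=
      isSimpleModule_iff_isCoatom.mpr
        (Ideal.isMaximal_def.mp (IsLocalRing.maximalIdeal.isMaximal S))
    exact modLength_eq_one_of_isSimpleModule
  have h1R' : modLength R (S ⧸ (Ideal.span {π} : Ideal S)) = 1 := by rw [← hnπ]; exact h1R
  -- injectivity facts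
  have hφne : ∀ y : R, y ≠ 0 → algebraMap R S y ≠ 0 := fun y hy h =>
    hy (hφ (by rw [h, map_zero]))
  -- the general sandwich computation: for any nonzero y, ℓ_R(R/yR) equals
  -- ℓ_R(S/yS), the latter being finite.
  have key : ∀ y : R, y ≠ 0 →
      modLength R (R ⧸ (Ideal.span {y} : Ideal R)) + modLength R (S ⧸
        (LinearMap.range (Algebra.linearMap R S))) =
      modLength R (S ⧸ ((Ideal.span {algebraMap R S y} : Ideal S).restrictScalars R)) +
        modLength R (S ⧸ (LinearMap.range (Algebra.linearMap R S))) := by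
    intro y hy
    set T : Submodule R S := LinearMap.range (Algebra.linearMap R S) with hT
    set P : Submodule R S := Submodule.map (Algebra.linearMap R S) ((Ideal.span {y} : Ideal R) : Submodule R R) with hP
    set X : Submodule R S := (Ideal.span {algebraMap R S y} : Ideal S).restrictScalars R with hX
    have hPT : P ≤ T := by
      rintro _ ⟨z, hz, rfl⟩
      exact ⟨z, rfl⟩
    have hPX : P ≤ X := by
      rintro _ ⟨z, hz, rfl⟩
      obtain ⟨c, hc⟩ := Ideal.mem_span_singleton'.mp hz
      refine Ideal.mem_span_singleton'.mpr ⟨algebraMap R S c, ?_⟩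
      rw [← map_mul, hc]
      simp [Algebra.linearMap_apply]
    -- decomposition 1 : ℓ(S/P) = ℓ(R/(y)) + ℓ(S/T)
    have eq1 : modLength R (S ⧸ P) =
        modLength R (R ⧸ (Ideal.span {y} : Ideal R)) + modLength R (S ⧸ T) := by
      rw [modLength_eq_add (Submodule.map P.mkQ T)]
      congr 1
      · set ψ : R →ₗ[R] (S ⧸ P) := P.mkQ ∘ₗ Algebra.linearMap R S with hψ
        have hker : LinearMap.ker ψ = ((Ideal.span {y} : Ideal R) : Submodule R R) := by
          ext r
          simp only [hψ, LinearMap.mem_ker, LinearMap.coe_comp, Function.comp_apply,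
            Submodule.mkQ_apply, Submodule.Quotient.mk_eq_zero, hP]
          constructor
          · rintro h
            obtain ⟨z, hz, hzr⟩ := h
            have : z = r := hφ hzr
            exact this ▸ hz
          · intro h
            exact ⟨r, h, rfl⟩
        have hrange : LinearMap.range ψ = Submodule.map P.mkQ T := by
          rw [hψ, LinearMap.range_comp, hT]
        have e : (R ⧸ (Ideal.span {y} : Ideal R)) ≃ₗ[R] (Submodule.map P.mkQ T) :=
          (Submodule.quotEquivOfEq _ _ hker.symm).trans
            (ψ.quotKerEquivRange.trans (LinearEquiv.ofEq _ _ hrange))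
        exact (modLength_congr e).symm
      · exact modLength_congr (Submodule.quotientQuotientEquivQuotient P T hPT)
    -- decomposition 2 : ℓ(S/P) = ℓ(S/T) + ℓ(S/X)
    have eq2 : modLength R (S ⧸ P) = modLength R (S ⧸ T) + modLength R (S ⧸ X) := by
      rw [modLength_eq_add (Submodule.map P.mkQ X)]
      congr 1
      · set χ : S →ₗ[R] (S ⧸ P) := P.mkQ ∘ₗ (LinearMap.mul R S (algebraMap R S y)) with hχ
        have hker : LinearMap.ker χ = T := by
          ext s
          simp only [hχ, LinearMap.mem_ker, LinearMap.coe_comp, Function.comp_apply,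
            LinearMap.mul_apply', Submodule.mkQ_apply, Submodule.Quotient.mk_eq_zero, hP, hT]
          constructor
          · rintro ⟨z, hz, hzs⟩
            obtain ⟨c, hc⟩ := Ideal.mem_span_singleton'.mp hz
            rw [Algebra.linearMap_apply] at hzs
            have h2 : algebraMap R S y * (s - algebraMap R S c) = 0 := by
              rw [mul_sub, ← hzs, ← map_mul, mul_comm y c, hc, sub_self]
            rcases mul_eq_zero.mp h2 with h | h
            · exact absurd h (hφne y hy)
            · exact ⟨c, (sub_eq_zero.mp h).symm⟩
          · rintro ⟨r, rfl⟩
            refine ⟨y * r, Ideal.mul_mem_right r _ (Ideal.mem_span_singleton_self y), ?_⟩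
            simp [Algebra.linearMap_apply, map_mul]
        have hrange : LinearMap.range χ = Submodule.map P.mkQ X := by
          rw [hχ, LinearMap.range_comp]
          congr 1
          ext z
          simp only [LinearMap.mem_range, LinearMap.mul_apply', hX, Submodule.restrictScalars_mem,
            Ideal.mem_span_singleton']
          exact ⟨fun ⟨c, hc⟩ => ⟨c, by rw [mul_comm]; exact hc⟩,
            fun ⟨c, hc⟩ => ⟨c, by rw [mul_comm]; exact hc⟩⟩
        have e : (S ⧸ T) ≃ₗ[R] (Submodule.map P.mkQ X) :=
          (Submodule.quotEquivOfEq _ _ hker.symm).trans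
            (χ.quotKerEquivRange.trans (LinearEquiv.ofEq _ _ hrange))
        exact (modLength_congr e).symm
      · exact modLength_congr (Submodule.quotientQuotientEquivQuotient P X hPX)
    rw [← eq1, eq2, add_comm]
  -- ℓ_R(S/(π^k)) is given by the pow lemma; transfer along restrictScalars
  have hres : ∀ y : R, y ≠ 0 → ∀ k : ℕ, Associated (algebraMap R S y) (π ^ k) →
      modLength R (S ⧸ ((Ideal.span {algebraMap R S y} : Ideal S).restrictScalars R)) = k := by
    intro y hy k hk
    have hspan : (Ideal.span {algebraMap R S y} : Ideal S) = Ideal.span {π ^ k} :=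
      Ideal.span_singleton_eq_span_singleton.mpr hk
    have e : (S ⧸ ((Ideal.span {algebraMap R S y} : Ideal S).restrictScalars R)) ≃ₗ[R]
        (S ⧸ (Ideal.span {π ^ k} : Ideal S)) :=
      (Submodule.Quotient.restrictScalarsEquiv R (Ideal.span {algebraMap R S y})).trans
        ((Submodule.quotEquivOfEq _ _ hspan).restrictScalars R)
    rw [modLength_congr e]
    exact modLength_quot_pow R π hπ0 h1R' k
  -- finiteness of ℓ_R(S/T)
  have Cfin : modLength R (S ⧸ (LinearMap.range (Algebra.linearMap R S))) ≠ ⊤ := by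
    obtain ⟨d, hd0, hd⟩ := hdenom
    set T : Submodule R S := LinearMap.range (Algebra.linearMap R S) with hT
    set Y : Submodule R S := (Ideal.span {algebraMap R S d} : Ideal S).restrictScalars R with hY
    have hYT : Y ≤ T := by
      intro z hz
      obtain ⟨c, hc⟩ := Ideal.mem_span_singleton'.mp hz
      obtain ⟨r, hr⟩ := hd c
      exact ⟨r, by rw [Algebra.linearMap_apply, ← hr, mul_comm]; exact hc⟩
    have hsurj : Function.Surjective (Submodule.mapQ Y T LinearMap.id (by simpa using hYT)) := by
      intro z
      obtain ⟨s, rfl⟩ := T.mkQ_surjective z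
      exact ⟨Y.mkQ s, by simp [Submodule.mapQ_apply]⟩
    have hle : modLength R (S ⧸ T) ≤ modLength R (S ⧸ Y) :=
      modLength_le_of_surjective _ hsurj
    obtain ⟨kd, hkd⟩ := IsDiscreteValuationRing.associated_pow_irreducible (hφne d hd0) hπ
    rw [hY, hres d hd0 kd hkd] at hle
    exact ne_top_of_le_ne_top (by simp) hle
  -- put everything together
  obtain ⟨k, hk⟩ := IsDiscreteValuationRing.associated_pow_irreducible (hφne x hx) hπ
  have h2 := key x hx
  rw [hres x hx k hk] at h2
  have hLHS : modLength R (R ⧸ (Ideal.span {x} : Ideal R)) = k :=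
    WithTop.add_right_cancel Cfin h2
  have hspan : (Ideal.span {algebraMap R S x} : Ideal S) = Ideal.span {π ^ k} :=
    Ideal.span_singleton_eq_span_singleton.mpr hk
  rw [hLHS, hspan]
  exact (modLength_quot_pow S π hπ0 h1S k).symm

end Sandwich

/-- Let `(R, m)` be a one-dimensional Cohen-Macaulay local ring whose
integral closure `R̄` in `Q(R)` is a DVR with maximal ideal `n`, finitely generated as an
`R`-module, with `R/m ≅ R̄/n`.  Let `I` be a regular ideal, `a, b` non-zerodivisors with
`α = a/b ∈ R : I`.  Then `ℓ_R(R/αI) = ℓ_R(R/I) + v(α)`, i.e. (since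
`v(α) = ℓ_{R̄}(R̄/aR̄) − ℓ_{R̄}(R̄/bR̄)`)
`ℓ_R(R/αI) + ℓ_{R̄}(R̄/bR̄) = ℓ_R(R/I) + ℓ_{R̄}(R̄/aR̄)`. -/
theorem stmt12 (R : Type*) [CommRing R] [IsDomain R] [IsNoetherianRing R] [IsLocalRing R]
    (hdim : ringKrullDim R = 1)
    (hdepth : ∃ x ∈ IsLocalRing.maximalIdeal R, x ∈ nonZeroDivisors R)
    [IsDiscreteValuationRing ↥(integralClosure R (FractionRing R))]
    [Module.Finite R ↥(integralClosure R (FractionRing R))]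
    -- the natural map `R/m → R̄/n` is an isomorphism:
    (hres1 : ∀ r : R,
      algebraMap R ↥(integralClosure R (FractionRing R)) r ∈
          IsLocalRing.maximalIdeal ↥(integralClosure R (FractionRing R)) ↔
        r ∈ IsLocalRing.maximalIdeal R)
    (hres2 : ∀ y : ↥(integralClosure R (FractionRing R)), ∃ r : R,
      algebraMap R ↥(integralClosure R (FractionRing R)) r - y ∈
        IsLocalRing.maximalIdeal ↥(integralClosure R (FractionRing R)))
    (I : Ideal R) (hreg : ∃ x ∈ I, x ∈ nonZeroDivisors R)
    (a b : R) (ha : a ∈ nonZeroDivisors R) (hb : b ∈ nonZeroDivisors R)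
    -- `α = a/b` lies in `R : I`, i.e. `αI ⊆ R`:
    (hcol : ∀ y ∈ I, ∃ r : R,
      algebraMap R (FractionRing R) r =
        IsLocalization.mk' (FractionRing R) a ⟨b, hb⟩ * algebraMap R (FractionRing R) y)
    -- `J` is the ideal `αI = (a/b)I` of `R`:
    (J : Ideal R)
    (hJ : ∀ x : R, x ∈ J ↔ ∃ y ∈ I, b * x = a * y) :
    modLength R (R ⧸ J) +
        modLength ↥(integralClosure R (FractionRing R))
          (↥(integralClosure R (FractionRing R)) ⧸
            Ideal.span {algebraMap R ↥(integralClosure R (FractionRing R)) b}) =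
      modLength R (R ⧸ I) +
        modLength ↥(integralClosure R (FractionRing R))
          (↥(integralClosure R (FractionRing R)) ⧸
            Ideal.span {algebraMap R ↥(integralClosure R (FractionRing R)) a}) := by
  classical
  have hQinj : Function.Injective (algebraMap R (FractionRing R)) :=
    IsFractionRing.injective R (FractionRing R)
  -- injectivity of the map into the integral closure
  have hφ : Function.Injective (algebraMap R ↥(integralClosure R (FractionRing R))) := by
    intro r r' h
    apply hQinj
    rw [IsScalarTower.algebraMap_apply R ↥(integralClosure R (FractionRing R)) (FractionRing R),
      IsScalarTower.algebraMap_apply R ↥(integralClosure R (FractionRing R)) (FractionRing R), h]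
  -- common denominator
  have hdenom : ∃ d : R, d ≠ 0 ∧ ∀ s : ↥(integralClosure R (FractionRing R)),
      ∃ r : R, algebraMap R ↥(integralClosure R (FractionRing R)) d * s =
        algebraMap R ↥(integralClosure R (FractionRing R)) r := by
    obtain ⟨gs, hgs⟩ := Module.Finite.fg_top (R := R) (M := ↥(integralClosure R (FractionRing R)))
    obtain ⟨d, hd⟩ := IsLocalization.exist_integer_multiples (nonZeroDivisors R) gs
      (fun s : ↥(integralClosure R (FractionRing R)) => (s : FractionRing R))
    refine ⟨d.1, nonZeroDivisors.ne_zero d.2, ?_⟩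
    set Z : Submodule R ↥(integralClosure R (FractionRing R)) :=
      { carrier := {t | ∃ r : R, algebraMap R ↥(integralClosure R (FractionRing R)) d.1 * t =
          algebraMap R ↥(integralClosure R (FractionRing R)) r}
        add_mem' := by
          rintro t1 t2 ⟨r1, hr1⟩ ⟨r2, hr2⟩
          exact ⟨r1 + r2, by rw [mul_add, hr1, hr2, map_add]⟩
        zero_mem' := ⟨0, by rw [mul_zero, map_zero]⟩
        smul_mem' := by
          rintro c t ⟨r, hr⟩
          refine ⟨c * r, ?_⟩
          rw [map_mul]
          calc algebraMap R ↥(integralClosure R (FractionRing R)) d.1 * c • t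
              = c • (algebraMap R ↥(integralClosure R (FractionRing R)) d.1 * t) := by
                rw [mul_smul_comm]
            _ = _ := by rw [hr, Algebra.smul_def] } with hZ
    have hgsZ : (gs : Set ↥(integralClosure R (FractionRing R))) ⊆ Z := by
      intro g hg
      obtain ⟨r, hr⟩ := hd g hg
      refine ⟨r, ?_⟩
      apply Subtype.ext
      calc ((algebraMap R ↥(integralClosure R (FractionRing R)) d.1 * g :
            ↥(integralClosure R (FractionRing R))) : FractionRing R)
          = algebraMap R (FractionRing R) d.1 * (g : FractionRing R) := by push_cast; rfl
        _ = d.1 • (g : FractionRing R) := (Algebra.smul_def _ _).symm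
        _ = algebraMap R (FractionRing R) r := hr.symm
        _ = _ := rfl
    have hZtop : Z = ⊤ := by
      rw [eq_top_iff, ← hgs]
      exact Submodule.span_le.mpr hgsZ
    intro s
    have : s ∈ Z := hZtop ▸ Submodule.mem_top
    exact this
  -- residue field condition gives ℓ_R(S/n) = 1
  haveI hsimp : IsSimpleModule R (↥(integralClosure R (FractionRing R)) ⧸
      (IsLocalRing.maximalIdeal ↥(integralClosure R (FractionRing R)))) :=
    isSimpleModule_of_res R ↥(integralClosure R (FractionRing R)) _ hres2
  have h1R : modLength R (↥(integralClosure R (FractionRing R)) ⧸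
      (IsLocalRing.maximalIdeal ↥(integralClosure R (FractionRing R)) :
        Ideal ↥(integralClosure R (FractionRing R)))) = 1 :=
    modLength_eq_one_of_isSimpleModule
  have ha0 : a ≠ 0 := nonZeroDivisors.ne_zero ha
  have hb0 : b ≠ 0 := nonZeroDivisors.ne_zero hb
  -- transfer lemma for a and b
  have Ea := modLength_span_eq hφ hdenom h1R a ha0
  have Eb := modLength_span_eq hφ hdenom h1R b hb0
  -- bJ = aI
  have hbJ : Ideal.span {b} * J = Ideal.span {a} * I := by
    ext z
    rw [Ideal.mem_span_singleton_mul, Ideal.mem_span_singleton_mul]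
    constructor
    · rintro ⟨w, hwJ, hbw⟩
      obtain ⟨y, hyI, hby⟩ := (hJ w).mp hwJ
      exact ⟨y, hyI, by rw [← hby]; exact hbw⟩
    · rintro ⟨y, hyI, hay⟩
      obtain ⟨r, hr⟩ := hcol y hyI
      have hmul : algebraMap R (FractionRing R) (b * r) = algebraMap R (FractionRing R) (a * y) := by
        rw [map_mul, map_mul, hr, mul_comm (algebraMap R (FractionRing R) b)]
        rw [mul_assoc, mul_comm (algebraMap R (FractionRing R) y), ← mul_assoc]
        rw [IsLocalization.mk'_spec]
      have hbr : b * r = a * y := hQinj hmul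
      refine ⟨r, (hJ r).mpr ⟨y, hyI, hbr⟩, ?_⟩
      rw [hbr, hay]
  -- length additivity for multiplication by a non-zerodivisor
  have hmulb : ∀ s : R, b * s = 0 → s = 0 := fun s hs => (mem_nonZeroDivisors_iff.mp hb).2 s (by rwa [mul_comm])
  have hmula : ∀ s : R, a * s = 0 → s = 0 := fun s hs => (mem_nonZeroDivisors_iff.mp ha).2 s (by rwa [mul_comm])
  have h1 := modLength_mul_span_singleton R R b hmulb J
  have h2 := modLength_mul_span_singleton R R a hmula I
  rw [hbJ] at h1
  have hmain : modLength R (R ⧸ J) + modLength R (R ⧸ (Ideal.span {b} : Ideal R)) =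
      modLength R (R ⧸ I) + modLength R (R ⧸ (Ideal.span {a} : Ideal R)) :=
    h1.symm.trans h2
  rw [← Ea, ← Eb]
  exact hmain
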